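/- arXiv:2402.14772 — 4 statements merged into one kernel-verified Lean document; each statement's English description precedes it below -/
import Mathlib

section
/- Let (K,|·|) be a non-Archimedean valued field, n ∈ ℕ, and let U : K^n → K^n be a linear map with matrix [u_ij] in the canonical basis. The following are equivalent: (1) U is a linear isometry of (K^n,‖·‖), i.e. ‖Ux‖ = ‖x‖ for all x ∈ K^n; (2) |det U| = 1 and max_{1≤i≤n}|u_ij| = 1 for every 1 ≤ j ≤ n; (3) |det U| = 1 and |u_ij| ≤ 1 for all 1 ≤ i,j ≤ n; (4) U is invertible and all entries of U and of U⁻¹ have valuation ≤ 1; (5) U ∈ GL(n,D), i.e. all entries of U lie in D and det U is a unit of D. -/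
open scoped Classical

structure IsNAV {K : Type*} [Field K] (v : K → ℝ) : Prop where
  nonneg : ∀ x, 0 ≤ v x
  eq_zero_iff : ∀ x, v x = 0 ↔ x = 0
  map_mul' : ∀ x y, v (x * y) = v x * v y
  add_le' : ∀ x y, v (x + y) ≤ max (v x) (v y)

def stdNorm {K : Type*} [Field K] (v : K → ℝ) {n : ℕ} (x : Fin n → K) : ℝ :=
  (List.ofFn fun i => v (x i)).foldr max 0

lemma foldr_max_nonneg (l : List ℝ) : 0 ≤ l.foldr max 0 := by
  induction l with
  | nil => simp
  | cons a l ih => simpa using Or.inr ih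

lemma le_foldr_max (l : List ℝ) {a : ℝ} (ha : a ∈ l) : a ≤ l.foldr max 0 := by
  induction l with
  | nil => simp at ha
  | cons b l ih =>
      rcases List.mem_cons.1 ha with h | h
      · simp [h]
      · simpa using Or.inr (ih h)

lemma foldr_max_le (l : List ℝ) {c : ℝ} (hc : 0 ≤ c) (h : ∀ a ∈ l, a ≤ c) :
    l.foldr max 0 ≤ c := by
  induction l with
  | nil => simpa using hc
  | cons b l ih =>
      simp only [List.foldr_cons, max_le_iff]
      exact ⟨h b (List.mem_cons_self), ih fun a ha => h a (List.mem_cons_of_mem _ ha)⟩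

lemma foldr_max_mem (l : List ℝ) : l.foldr max 0 = 0 ∨ l.foldr max 0 ∈ l := by
  induction l with
  | nil => left; rfl
  | cons b l ih =>
      simp only [List.foldr_cons]
      rcases le_total b (l.foldr max 0) with h | h
      · rw [max_eq_right h]
        rcases ih with h' | h'
        · left; exact h'
        · right; exact List.mem_cons_of_mem _ h'
      · rw [max_eq_left h]
        right; exact List.mem_cons_self


section helpers

variable {K : Type*} [Field K] {v : K → ℝ} (hv : IsNAV v)
include hv

lemma nav_zero : v 0 = 0 := (hv.eq_zero_iff 0).2 rfl

lemma nav_one : v 1 = 1 := by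
  have h := hv.map_mul' 1 1
  rw [one_mul] at h
  have h0 : v 1 ≠ 0 := fun h' => one_ne_zero ((hv.eq_zero_iff 1).1 h')
  have h2 := mul_left_cancel₀ h0 (by rw [mul_one, ← h] : v 1 * 1 = v 1 * v 1)
  exact h2.symm

lemma nav_neg (x : K) : v (-x) = v x := by
  have h1 : v (-1) * v (-1) = 1 := by
    rw [← hv.map_mul']; norm_num; exact nav_one hv
  have h2 : v (-1) = 1 := by
    rcases mul_self_eq_one_iff.1 h1 with h | h
    · exact h
    · nlinarith [hv.nonneg (-1)]
  calc v (-x) = v ((-1) * x) := by ring_nf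
    _ = v (-1) * v x := hv.map_mul' _ _
    _ = v x := by rw [h2, one_mul]

lemma nav_sum_le {ι : Type*} (s : Finset ι) (f : ι → K) {c : ℝ} (hc : 0 ≤ c)
    (h : ∀ i ∈ s, v (f i) ≤ c) : v (∑ i ∈ s, f i) ≤ c := by
  induction s using Finset.induction_on with
  | empty => simpa [nav_zero hv] using hc
  | insert _ _ hx ih =>
      rename_i a s
      rw [Finset.sum_insert hx]
      refine le_trans (hv.add_le' _ _) (max_le (h _ (Finset.mem_insert_self _ _)) ?_)
      exact ih fun i hi => h i (Finset.mem_insert_of_mem hi)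

lemma nav_prod {ι : Type*} (s : Finset ι) (f : ι → K) :
    v (∏ i ∈ s, f i) = ∏ i ∈ s, v (f i) := by
  induction s using Finset.induction_on with
  | empty => simpa using nav_one hv
  | insert _ _ hx ih => rw [Finset.prod_insert hx, Finset.prod_insert hx, hv.map_mul', ih]

variable {n : ℕ}

omit hv in lemma stdNorm_nonneg (x : Fin n → K) : 0 ≤ stdNorm v x := foldr_max_nonneg _

omit hv in lemma le_stdNorm (x : Fin n → K) (i : Fin n) : v (x i) ≤ stdNorm v x :=
  le_foldr_max _ (by simp [List.mem_ofFn])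

omit hv in lemma stdNorm_le {x : Fin n → K} {c : ℝ} (hc : 0 ≤ c) (h : ∀ i, v (x i) ≤ c) :
    stdNorm v x ≤ c := by
  refine foldr_max_le _ hc ?_
  intro a ha
  rcases List.mem_ofFn.1 ha with ⟨i, rfl⟩
  exact h i

omit hv in lemma stdNorm_exists {x : Fin n → K} (h : stdNorm v x ≠ 0) :
    ∃ i, v (x i) = stdNorm v x := by
  rcases foldr_max_mem (List.ofFn fun i => v (x i)) with h' | h'
  · exact absurd h' h
  · rcases List.mem_ofFn.1 h' with ⟨i, hi⟩
    exact ⟨i, hi⟩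

lemma stdNorm_eq_zero {x : Fin n → K} (h : stdNorm v x = 0) : x = 0 := by
  funext i
  have h1 : v (x i) ≤ 0 := h ▸ le_stdNorm x i
  have h2 : v (x i) = 0 := le_antisymm h1 (hv.nonneg _)
  exact (hv.eq_zero_iff _).1 h2

omit hv in lemma eq_one_of_mul {a b : ℝ} (hab : a * b = 1) (ha : a ≤ 1) (hb : b ≤ 1) (ha0 : 0 ≤ a) :
    a = 1 := by nlinarith

lemma nav_det_le {U : Matrix (Fin n) (Fin n) K} (hU : ∀ i j, v (U i j) ≤ 1) :
    v U.det ≤ 1 := by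
  rw [Matrix.det_apply]
  refine nav_sum_le hv _ _ zero_le_one ?_
  intro σ _
  have hterm : v (Equiv.Perm.sign σ • ∏ i, U (σ i) i) = v (∏ i, U (σ i) i) := by
    rcases Int.units_eq_one_or (Equiv.Perm.sign σ) with h | h <;> rw [h]
    · simp
    · simp only [Units.neg_smul, one_smul]
      exact nav_neg hv _
  rw [hterm, nav_prod hv]
  exact Finset.prod_le_one (fun i _ => hv.nonneg _) (fun i _ => hU _ _)

lemma nav_det_le_col {U : Matrix (Fin n) (Fin n) K} (hU : ∀ i j, v (U i j) ≤ 1) (j : Fin n) :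
    v U.det ≤ stdNorm v (fun i => U i j) := by
  rw [Matrix.det_apply]
  refine nav_sum_le hv _ _ (stdNorm_nonneg _) ?_
  intro σ _
  have hterm : v (Equiv.Perm.sign σ • ∏ i, U (σ i) i) = v (∏ i, U (σ i) i) := by
    rcases Int.units_eq_one_or (Equiv.Perm.sign σ) with h | h <;> rw [h]
    · simp
    · simp only [Units.neg_smul, one_smul]
      exact nav_neg hv _
  rw [hterm, nav_prod hv, ← Finset.mul_prod_erase Finset.univ _ (Finset.mem_univ j)]
  calc v (U (σ j) j) * ∏ i ∈ Finset.univ.erase j, v (U (σ i) i)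
      ≤ stdNorm v (fun i => U i j) * 1 := by
        refine mul_le_mul (le_stdNorm (fun i => U i j) (σ j)) ?_ ?_ (stdNorm_nonneg _)
        · exact Finset.prod_le_one (fun i _ => hv.nonneg _) (fun i _ => hU _ _)
        · exact Finset.prod_nonneg fun i _ => hv.nonneg _
    _ = stdNorm v (fun i => U i j) := mul_one _

lemma entries_le_of_isometry {U : Matrix (Fin n) (Fin n) K}
    (h : ∀ x, stdNorm v (U.mulVec x) = stdNorm v x) : ∀ i j, v (U i j) ≤ 1 := by
  intro i j
  have hs : stdNorm v (Pi.single j (1:K)) = 1 := by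
    refine le_antisymm (stdNorm_le zero_le_one ?_) ?_
    · intro k
      by_cases hk : k = j
      · subst hk; simp [nav_one hv]
      · simp [Pi.single_eq_of_ne hk, nav_zero hv]
    · have := le_stdNorm (v := v) (Pi.single j (1:K)) j
      simpa [nav_one hv] using this
  have hm : U.mulVec (Pi.single j (1:K)) = fun i => U i j := by
    funext k
    simp [Matrix.mulVec_single]
  have := le_stdNorm (v := v) (U.mulVec (Pi.single j (1:K))) i
  rw [h _, hs] at this
  rw [hm] at this
  exact this

lemma mulVec_stdNorm_le {U : Matrix (Fin n) (Fin n) K}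
    (hU : ∀ i j, v (U i j) ≤ 1) (x : Fin n → K) :
    stdNorm v (U.mulVec x) ≤ stdNorm v x := by
  refine stdNorm_le (stdNorm_nonneg _) ?_
  intro i
  show v (U.mulVec x i) ≤ _
  rw [Matrix.mulVec, dotProduct]
  refine nav_sum_le hv _ _ (stdNorm_nonneg _) ?_
  intro j _
  rw [hv.map_mul']
  calc v (U i j) * v (x j) ≤ 1 * stdNorm v x :=
        mul_le_mul (hU i j) (le_stdNorm _ _) (hv.nonneg _) zero_le_one
    _ = stdNorm v x := one_mul _

end helpers
/-- Characterization of the linear isometries of `(K^n, ‖·‖)` over a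
non-Archimedean valued field: they are exactly the matrices in `GL(n,D)`. -/
theorem linear_isometry_tfae
    {K : Type*} [Field K] (v : K → ℝ) (hv : IsNAV v)
    (n : ℕ) (U : Matrix (Fin n) (Fin n) K) :
    [ -- (1) `U` is a linear isometry of `(K^n, ‖·‖)`
      (∀ x : Fin n → K, stdNorm v (U.mulVec x) = stdNorm v x),
      -- (2) `|det U| = 1` and `max_i |u_ij| = 1` for every column `j`
      (v U.det = 1 ∧ ∀ j, (∀ i, v (U i j) ≤ 1) ∧ ∃ i, v (U i j) = 1),
      -- (3) `|det U| = 1` and all entries have valuation at most 1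
      (v U.det = 1 ∧ ∀ i j, v (U i j) ≤ 1),
      -- (4) `U` is invertible and all entries of `U` and `U⁻¹` have valuation at most 1
      (∃ V : Matrix (Fin n) (Fin n) K, U * V = 1 ∧ V * U = 1 ∧
        (∀ i j, v (U i j) ≤ 1) ∧ (∀ i j, v (V i j) ≤ 1)),
      -- (5) `U ∈ GL(n,D)`: entries in `D` and `det U` a unit of `D`
      ((∀ i j, v (U i j) ≤ 1) ∧ ∃ w : K, v w ≤ 1 ∧ U.det * w = 1) ].TFAE := by
  tfae_have 2 → 3 := by
    rintro ⟨h1, h2⟩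
    exact ⟨h1, fun i j => (h2 j).1 i⟩
  tfae_have 3 → 2 := by
    rintro ⟨hdet, hent⟩
    refine ⟨hdet, fun j => ⟨fun i => hent i j, ?_⟩⟩
    have hc1 : stdNorm v (fun i => U i j) ≤ 1 := stdNorm_le zero_le_one (fun i => hent i j)
    have hc2 : (1:ℝ) ≤ stdNorm v (fun i => U i j) := hdet ▸ nav_det_le_col hv hent j
    have hc : stdNorm v (fun i => U i j) = 1 := le_antisymm hc1 hc2
    obtain ⟨i, hi⟩ := stdNorm_exists (x := fun i => U i j) (by rw [hc]; norm_num)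
    exact ⟨i, by rw [hi, hc]⟩
  tfae_have 3 → 5 := by
    rintro ⟨hdet, hent⟩
    have h0 : U.det ≠ 0 := by
      intro h
      rw [h, nav_zero hv] at hdet
      exact one_ne_zero hdet.symm
    refine ⟨hent, U.det⁻¹, ?_, mul_inv_cancel₀ h0⟩
    have h1 : v U.det * v U.det⁻¹ = 1 := by
      rw [← hv.map_mul', mul_inv_cancel₀ h0, nav_one hv]
    rw [hdet, one_mul] at h1
    exact le_of_eq h1
  tfae_have 5 → 4 := by
    rintro ⟨hent, w, hw, hdw⟩
    refine ⟨w • U.adjugate, ?_, ?_, hent, ?_⟩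
    · rw [Matrix.mul_smul, Matrix.mul_adjugate, smul_smul, mul_comm, hdw, one_smul]
    · rw [Matrix.smul_mul, Matrix.adjugate_mul, smul_smul, mul_comm, hdw, one_smul]
    · intro i j
      have hadj : v (U.adjugate i j) ≤ 1 := by
        rw [Matrix.adjugate_apply]
        refine nav_det_le hv ?_
        intro k l
        by_cases hk : k = j
        · subst hk
          rw [Matrix.updateRow_self]
          by_cases hl : l = i
          · subst hl; simp [nav_one hv]
          · simp [Pi.single_eq_of_ne hl, nav_zero hv]
        · rw [Matrix.updateRow_ne hk]
          exact hent k l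
      have : (w • U.adjugate) i j = w * U.adjugate i j := rfl
      rw [this, hv.map_mul']
      calc v w * v (U.adjugate i j) ≤ 1 * 1 :=
            mul_le_mul hw hadj (hv.nonneg _) zero_le_one
        _ = 1 := one_mul _
  tfae_have 4 → 3 := by
    rintro ⟨V, hUV, _, hU, hV⟩
    have h1 : v U.det * v V.det = 1 := by
      rw [← hv.map_mul', ← Matrix.det_mul, hUV, Matrix.det_one, nav_one hv]
    exact ⟨eq_one_of_mul h1 (nav_det_le hv hU) (nav_det_le hv hV) (hv.nonneg _), hU⟩
  tfae_have 4 → 1 := by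
    rintro ⟨V, hUV, hVU, hU, hV⟩
    intro x
    refine le_antisymm (mulVec_stdNorm_le hv hU x) ?_
    have h := mulVec_stdNorm_le hv hV (U.mulVec x)
    rwa [Matrix.mulVec_mulVec, hVU, Matrix.one_mulVec] at h
  tfae_have 1 → 3 := by
    intro h
    have hent : ∀ i j, v (U i j) ≤ 1 := entries_le_of_isometry hv h
    have hdet : U.det ≠ 0 := by
      intro hd
      obtain ⟨y, hy0, hy⟩ := (Matrix.exists_mulVec_eq_zero_iff).2 hd
      have : stdNorm v y = 0 := by
        rw [← h y, hy]
        refine le_antisymm (stdNorm_le le_rfl ?_) (stdNorm_nonneg _)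
        intro i
        simp [nav_zero hv]
      exact hy0 (stdNorm_eq_zero hv this)
    have hunit : IsUnit U.det := hdet.isUnit
    have hUV : U * U⁻¹ = 1 := Matrix.mul_nonsing_inv U hunit
    have hVU : U⁻¹ * U = 1 := Matrix.nonsing_inv_mul U hunit
    have hVisom : ∀ y, stdNorm v (U⁻¹.mulVec y) = stdNorm v y := by
      intro y
      calc stdNorm v (U⁻¹.mulVec y) = stdNorm v (U.mulVec (U⁻¹.mulVec y)) := (h _).symm
        _ = stdNorm v ((U * U⁻¹).mulVec y) := by rw [Matrix.mulVec_mulVec]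
        _ = stdNorm v y := by rw [hUV, Matrix.one_mulVec]
    have hVent := entries_le_of_isometry hv hVisom
    have h1 : v U.det * v U⁻¹.det = 1 := by
      rw [← hv.map_mul', ← Matrix.det_mul, hUV, Matrix.det_one, nav_one hv]
    exact ⟨eq_one_of_mul h1 (nav_det_le hv hent) (nav_det_le hv hVent) (hv.nonneg _), hent⟩
  tfae_finish
end

section
/- Let (K,|·|) be a non-Archimedean valued field with residue field k, and assume ch K = 0 and ch k > 0. Consider the matrices A₀ := [[1,1],[1,2]] and A_n := [[4n²+1, 2n],[2n, 1]] for n ≥ 1, which lie in SL(2,ℤ) ⊆ SL(2,D). Then for every ε ∈ (0,1] there exists an infinite set S(ε) ⊆ ℕ such that the family {A_i}_{i∈S(ε)} is a basis of a free subgroup of SL(2,ℤ,ε). -/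
/-- The Neumann–Magnus matrices `A₀ = [[1,1],[1,2]]`, `Aₙ = [[4n²+1, 2n],[2n, 1]]`,
as elements of `SL(2,ℤ)`. -/
def magnusA (n : ℕ) : Matrix.SpecialLinearGroup (Fin 2) ℤ :=
  if n = 0 then ⟨!![1, 1; 1, 2], by simp [Matrix.det_fin_two_of]⟩
  else ⟨!![4 * (n : ℤ) ^ 2 + 1, 2 * n; 2 * n, 1], by simp [Matrix.det_fin_two_of]; ring⟩

namespace MagnusPf


open Matrix

abbrev SL2Z := Matrix.SpecialLinearGroup (Fin 2) ℤ

noncomputable def mat (g : SL2Z) : Matrix (Fin 2) (Fin 2) ℝ :=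
  (Int.castRingHom ℝ).mapMatrix (g : Matrix (Fin 2) (Fin 2) ℤ)

lemma mat_one : mat 1 = 1 := by simp [mat, Matrix.map_mul]

lemma mat_mul (g h : SL2Z) : mat (g * h) = mat g * mat h := by
  rw [mat, mat, mat, Matrix.SpecialLinearGroup.coe_mul, _root_.map_mul]

lemma mat_mulVec_ne (g : SL2Z) {x : Fin 2 → ℝ} (hx : x ≠ 0) : mat g *ᵥ x ≠ 0 := by
  intro h
  apply hx
  have h2 : mat g⁻¹ *ᵥ (mat g *ᵥ x) = x := by
    rw [Matrix.mulVec_mulVec, ← mat_mul, inv_mul_cancel, mat_one, Matrix.one_mulVec]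
  rw [h, Matrix.mulVec_zero] at h2
  exact h2.symm

def PV := {x : Fin 2 → ℝ // x ≠ 0}

noncomputable instance : SMul SL2Z PV :=
  ⟨fun g x => ⟨mat g *ᵥ x.1, mat_mulVec_ne g x.2⟩⟩

lemma smul_coe (g : SL2Z) (x : PV) : (g • x).1 = mat g *ᵥ x.1 := rfl

noncomputable instance : MulAction SL2Z PV where
  one_smul x := Subtype.ext (by rw [smul_coe, mat_one, Matrix.one_mulVec])
  mul_smul g h x := Subtype.ext (by
    rw [smul_coe, smul_coe, smul_coe, Matrix.mulVec_mulVec, mat_mul])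

/-! ### Ping-pong sets -/

def Xset (n : ℕ) : Set PV :=
  {x | (x.1 0 - (2*(n:ℝ)-1) * x.1 1) * (x.1 0 - (2*(n:ℝ)+1) * x.1 1) ≤ 0}

def Yset (n : ℕ) : Set PV :=
  {x | ((2*(n:ℝ)-1) * x.1 0 + x.1 1) * ((2*(n:ℝ)+1) * x.1 0 + x.1 1) ≤ 0}

lemma between_of_prod {a b x y : ℝ} (hy : 0 < y) (hab : a < b)
    (h : (x - a*y) * (x - b*y) ≤ 0) : a*y ≤ x ∧ x ≤ b*y := by
  constructor
  · by_contra hx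
    push_neg at hx
    have h1 : 0 < a*y - x := by linarith
    have h2 : 0 < b*y - x := by nlinarith [mul_pos (sub_pos.2 hab) hy]
    nlinarith [mul_pos h1 h2]
  · by_contra hx
    push_neg at hx
    have h1 : 0 < x - b*y := by linarith
    have h2 : 0 < x - a*y := by nlinarith [mul_pos (sub_pos.2 hab) hy]
    nlinarith [mul_pos h1 h2]

lemma between_of_prod' {a b x y : ℝ} (hy : y < 0) (hab : a < b)
    (h : (x - a*y) * (x - b*y) ≤ 0) : b*y ≤ x ∧ x ≤ a*y := by
  have h' : (-x - a*(-y)) * (-x - b*(-y)) ≤ 0 := by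
    have : (-x - a*(-y)) * (-x - b*(-y)) = (x - a*y) * (x - b*y) := by ring
    rw [this]; exact h
  obtain ⟨h1, h2⟩ := between_of_prod (by linarith : (0:ℝ) < -y) hab h'
  constructor <;> nlinarith

lemma Xset_snd_ne {n : ℕ} {x : PV} (hx : x ∈ Xset n) : x.1 1 ≠ 0 := by
  intro h0
  apply x.2
  simp only [Xset, Set.mem_setOf_eq, h0, mul_zero, sub_zero] at hx
  have h1 : x.1 0 = 0 := by nlinarith [sq_nonneg (x.1 0)]
  funext i; fin_cases i
  · simpa using h1
  · simpa using h0

lemma Yset_fst_ne {n : ℕ} {x : PV} (hx : x ∈ Yset n) : x.1 0 ≠ 0 := by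
  intro h0
  apply x.2
  simp only [Yset, Set.mem_setOf_eq, h0, mul_zero, zero_add] at hx
  have h1 : x.1 1 = 0 := by nlinarith [sq_nonneg (x.1 1)]
  funext i; fin_cases i
  · simpa using h0
  · simpa using h1

lemma Yset_mem_between {n : ℕ} {x : PV} (hx : x ∈ Yset n) :
    ((0 < x.1 0 → -(2*(n:ℝ)+1) * x.1 0 ≤ x.1 1 ∧ x.1 1 ≤ -(2*(n:ℝ)-1) * x.1 0) ∧
     (x.1 0 < 0 → -(2*(n:ℝ)-1) * x.1 0 ≤ x.1 1 ∧ x.1 1 ≤ -(2*(n:ℝ)+1) * x.1 0)) := by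
  have hab : -(2*(n:ℝ)+1) < -(2*(n:ℝ)-1) := by linarith
  simp only [Yset, Set.mem_setOf_eq] at hx
  have h' : (x.1 1 - (-(2*(n:ℝ)+1)) * x.1 0) * (x.1 1 - (-(2*(n:ℝ)-1)) * x.1 0) ≤ 0 := by
    have : (x.1 1 - (-(2*(n:ℝ)+1)) * x.1 0) * (x.1 1 - (-(2*(n:ℝ)-1)) * x.1 0)
        = ((2*(n:ℝ)-1) * x.1 0 + x.1 1) * ((2*(n:ℝ)+1) * x.1 0 + x.1 1) := by ring
    rw [this]; exact hx
  exact ⟨fun h => between_of_prod h hab h', fun h => (between_of_prod' h hab h')⟩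

lemma Xset_mem_between {n : ℕ} {x : PV} (hx : x ∈ Xset n) :
    ((0 < x.1 1 → (2*(n:ℝ)-1) * x.1 1 ≤ x.1 0 ∧ x.1 0 ≤ (2*(n:ℝ)+1) * x.1 1) ∧
     (x.1 1 < 0 → (2*(n:ℝ)+1) * x.1 1 ≤ x.1 0 ∧ x.1 0 ≤ (2*(n:ℝ)-1) * x.1 1)) := by
  have hab : (2*(n:ℝ)-1) < (2*(n:ℝ)+1) := by linarith
  simp only [Xset, Set.mem_setOf_eq] at hx
  exact ⟨fun h => between_of_prod h hab hx, fun h => between_of_prod' h hab hx⟩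

lemma Xset_disj_aux {n m : ℕ} (hnm : n + 2 ≤ m) : Disjoint (Xset n) (Xset m) := by
  rw [Set.disjoint_left]
  intro x hxn hxm
  have hy := Xset_snd_ne hxn
  have hmn : (2*(n:ℝ)+1) < (2*(m:ℝ)-1) := by
    have : (n:ℝ) + 2 ≤ (m:ℝ) := by exact_mod_cast hnm
    linarith
  rcases hy.lt_or_gt with h | h
  · obtain ⟨h1, h2⟩ := (Xset_mem_between hxn).2 h
    obtain ⟨h3, h4⟩ := (Xset_mem_between hxm).2 h
    nlinarith [mul_pos (sub_pos.2 hmn) (neg_pos.2 h)]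
  · obtain ⟨h1, h2⟩ := (Xset_mem_between hxn).1 h
    obtain ⟨h3, h4⟩ := (Xset_mem_between hxm).1 h
    nlinarith [mul_pos (sub_pos.2 hmn) h]

lemma Yset_disj_aux {n m : ℕ} (hnm : n + 2 ≤ m) : Disjoint (Yset n) (Yset m) := by
  rw [Set.disjoint_left]
  intro x hxn hxm
  have hx0 := Yset_fst_ne hxn
  have hmn : (2*(n:ℝ)+1) < (2*(m:ℝ)-1) := by
    have : (n:ℝ) + 2 ≤ (m:ℝ) := by exact_mod_cast hnm
    linarith
  rcases hx0.lt_or_gt with h | h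
  · obtain ⟨h1, h2⟩ := (Yset_mem_between hxn).2 h
    obtain ⟨h3, h4⟩ := (Yset_mem_between hxm).2 h
    nlinarith [mul_pos (sub_pos.2 hmn) (neg_pos.2 h)]
  · obtain ⟨h1, h2⟩ := (Yset_mem_between hxn).1 h
    obtain ⟨h3, h4⟩ := (Yset_mem_between hxm).1 h
    nlinarith [mul_pos (sub_pos.2 hmn) h]

lemma XYset_disj {n m : ℕ} (hn : 1 ≤ n) (hm : 1 ≤ m) : Disjoint (Xset n) (Yset m) := by
  rw [Set.disjoint_left]
  intro x hxn hxm
  have hy := Xset_snd_ne hxn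
  have hx0 := Yset_fst_ne hxm
  have h1n : (1:ℝ) ≤ 2*(n:ℝ)-1 := by
    have : (1:ℝ) ≤ (n:ℝ) := by exact_mod_cast hn
    linarith
  have h1m : (1:ℝ) ≤ 2*(m:ℝ)-1 := by
    have : (1:ℝ) ≤ (m:ℝ) := by exact_mod_cast hm
    linarith
  rcases hy.lt_or_gt with h | h
  · -- x.1 1 < 0, then x.1 0 ≤ (2n-1) * x.1 1 < 0
    obtain ⟨h1, h2⟩ := (Xset_mem_between hxn).2 h
    have hx0neg : x.1 0 < 0 := by nlinarith
    obtain ⟨h3, h4⟩ := (Yset_mem_between hxm).2 hx0neg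
    nlinarith
  · obtain ⟨h1, h2⟩ := (Xset_mem_between hxn).1 h
    have hx0pos : 0 < x.1 0 := by nlinarith
    obtain ⟨h3, h4⟩ := (Yset_mem_between hxm).1 hx0pos
    nlinarith

lemma Xset_nonempty (n : ℕ) : (Xset n).Nonempty := by
  refine ⟨⟨![2*(n:ℝ), 1], ?_⟩, ?_⟩
  · intro h
    have := congrFun h 1
    simp at this
  · simp only [Xset, Set.mem_setOf_eq]
    change (2*(n:ℝ) - (2*(n:ℝ)-1) * 1) * (2*(n:ℝ) - (2*(n:ℝ)+1) * 1) ≤ 0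
    linarith [show (2*(n:ℝ) - (2*(n:ℝ)-1) * 1) * (2*(n:ℝ) - (2*(n:ℝ)+1) * 1) = -1 by ring]

lemma magnus_smul_apply {n : ℕ} (hn : n ≠ 0) (x : PV) :
    (magnusA n • x).1 0 = (4*(n:ℝ)^2+1) * x.1 0 + 2*(n:ℝ) * x.1 1 ∧
    (magnusA n • x).1 1 = 2*(n:ℝ) * x.1 0 + x.1 1 := by
  refine ⟨?_, ?_⟩ <;> rw [smul_coe] <;>
    simp [mat, magnusA, hn, Matrix.mulVec, dotProduct, Fin.sum_univ_two,
      RingHom.mapMatrix_apply, Matrix.map_apply] <;>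
    push_cast <;> ring

lemma magnus_inv_smul_apply {n : ℕ} (hn : n ≠ 0) (x : PV) :
    ((magnusA n)⁻¹ • x).1 0 = x.1 0 - 2*(n:ℝ) * x.1 1 ∧
    ((magnusA n)⁻¹ • x).1 1 = -(2*(n:ℝ)) * x.1 0 + (4*(n:ℝ)^2+1) * x.1 1 := by
  refine ⟨?_, ?_⟩ <;> rw [smul_coe, mat, Matrix.SpecialLinearGroup.coe_inv] <;>
    simp [mat, magnusA, hn, Matrix.mulVec, dotProduct, Fin.sum_univ_two,
      RingHom.mapMatrix_apply, Matrix.map_apply, Matrix.adjugate_fin_two_of,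
      Matrix.SpecialLinearGroup.coe_inv] <;>
    push_cast <;> ring

lemma magnus_maps_X {n : ℕ} (hn : n ≠ 0) {x : PV} (hx : x ∉ Yset n) :
    magnusA n • x ∈ Xset n := by
  simp only [Yset, Set.mem_setOf_eq, not_le] at hx
  obtain ⟨h0, h1⟩ := magnus_smul_apply hn x
  simp only [Xset, Set.mem_setOf_eq, h0, h1]
  nlinarith [hx]

lemma magnus_inv_maps_Y {n : ℕ} (hn : n ≠ 0) {x : PV} (hx : x ∉ Xset n) :
    (magnusA n)⁻¹ • x ∈ Yset n := by
  simp only [Xset, Set.mem_setOf_eq, not_le] at hx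
  obtain ⟨h0, h1⟩ := magnus_inv_smul_apply hn x
  simp only [Yset, Set.mem_setOf_eq, h0, h1]
  nlinarith [hx]

/-! ### Valuation lemmas -/

section NAV

variable {K : Type*} [Field K] {v : K → ℝ} {ε : ℝ}

lemma v_zero (hv : IsNAV v) : v 0 = 0 := (hv.eq_zero_iff 0).2 rfl

lemma v_one (hv : IsNAV v) : v 1 = 1 := by
  have h := hv.map_mul' 1 1
  rw [mul_one] at h
  have h1 : v 1 ≠ 0 := fun h0 => one_ne_zero ((hv.eq_zero_iff 1).1 h0)
  have h2 : v 1 * v 1 = v 1 * 1 := by rw [mul_one]; linarith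
  exact (mul_left_cancel₀ h1 h2)

lemma v_neg (hv : IsNAV v) (x : K) : v (-x) = v x := by
  have h1 : v (-1 : K) * v (-1 : K) = 1 := by
    rw [← hv.map_mul']; norm_num [v_one hv]
  have h2 : v (-1 : K) = 1 := by nlinarith [hv.nonneg (-1 : K)]
  rw [show -x = -1 * x by ring, hv.map_mul', h2, one_mul]

lemma v_natcast (hv : IsNAV v) (m : ℕ) : v (m : K) ≤ 1 := by
  induction m with
  | zero => simp [v_zero hv]
  | succ n ih =>
    push_cast
    exact le_trans (hv.add_le' _ _) (max_le ih (le_of_eq (v_one hv)))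

lemma v_intcast (hv : IsNAV v) (m : ℤ) : v (m : K) ≤ 1 := by
  obtain ⟨n, rfl | rfl⟩ := m.eq_nat_or_neg
  · push_cast; exact v_natcast hv n
  · push_cast; rw [v_neg hv]; exact v_natcast hv n

lemma v_pow (hv : IsNAV v) (x : K) (m : ℕ) : v (x ^ m) = v x ^ m := by
  induction m with
  | zero => simp [v_one hv]
  | succ n ih => rw [pow_succ, pow_succ, hv.map_mul', ih]

lemma vmul_lt (hv : IsNAV v) {a b : K} (ha : v a < ε) (hb : v b ≤ 1) : v (a * b) < ε := by
  rw [hv.map_mul']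
  calc v a * v b ≤ v a * 1 := mul_le_mul_of_nonneg_left hb (hv.nonneg a)
  _ = v a := mul_one _
  _ < ε := ha

lemma vadd_lt (hv : IsNAV v) {a b : K} (ha : v a < ε) (hb : v b < ε) : v (a + b) < ε :=
  lt_of_le_of_lt (hv.add_le' a b) (max_lt ha hb)

lemma v_le_one_of (hv : IsNAV v) (hε1 : ε ≤ 1) {a : K} (ha : v (a - 1) < ε) : v a ≤ 1 := by
  rw [show a = (a - 1) + 1 by ring]
  exact le_trans (hv.add_le' _ _)
    (max_le (le_of_lt (lt_of_lt_of_le ha hε1)) (le_of_eq (v_one hv)))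

/-- The property of lying in `SL(2,ℤ,ε)` (with respect to `v`). -/
def Cond (v : K → ℝ) (ε : ℝ) (g : SL2Z) : Prop :=
  (∀ k : Fin 2, v ((((g : Matrix (Fin 2) (Fin 2) ℤ) k k : ℤ) : K) - 1) < ε) ∧
  (∀ k l : Fin 2, k ≠ l → v ((((g : Matrix (Fin 2) (Fin 2) ℤ) k l : ℤ) : K)) < ε)

lemma cond_one (hv : IsNAV v) (hε : 0 < ε) : Cond v ε (1 : SL2Z) := by
  constructor
  · intro k
    simp only [Matrix.SpecialLinearGroup.coe_one, Matrix.one_apply_eq]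
    simpa [v_zero hv] using hε
  · intro k l hkl
    simp only [Matrix.SpecialLinearGroup.coe_one, Matrix.one_apply_ne hkl]
    simpa [v_zero hv] using hε

lemma cond_mul (hv : IsNAV v) (hε1 : ε ≤ 1) {g h : SL2Z}
    (hg : Cond v ε g) (hh : Cond v ε h) : Cond v ε (g * h) := by
  obtain ⟨hg1, hg2⟩ := hg
  obtain ⟨hh1, hh2⟩ := hh
  have hε : 0 < ε := lt_of_le_of_lt (hv.nonneg _) (hg1 0)
  have hgd : ∀ k : Fin 2, v ((((g : Matrix (Fin 2) (Fin 2) ℤ) k k : ℤ) : K)) ≤ 1 :=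
    fun k => v_le_one_of hv hε1 (hg1 k)
  have hhd : ∀ k : Fin 2, v ((((h : Matrix (Fin 2) (Fin 2) ℤ) k k : ℤ) : K)) ≤ 1 :=
    fun k => v_le_one_of hv hε1 (hh1 k)
  have hho : ∀ k l : Fin 2, k ≠ l →
      v ((((h : Matrix (Fin 2) (Fin 2) ℤ) k l : ℤ) : K)) ≤ 1 :=
    fun k l hkl => le_of_lt (lt_of_lt_of_le (hh2 k l hkl) hε1)
  constructor
  · intro k
    rw [Matrix.SpecialLinearGroup.coe_mul, Matrix.mul_apply, Fin.sum_univ_two]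
    fin_cases k
    · show v (((((g : Matrix (Fin 2) (Fin 2) ℤ) 0 0 * (h : Matrix (Fin 2) (Fin 2) ℤ) 0 0 +
        (g : Matrix (Fin 2) (Fin 2) ℤ) 0 1 * (h : Matrix (Fin 2) (Fin 2) ℤ) 1 0 : ℤ)) : K) - 1) < ε
      have e : (((((g : Matrix (Fin 2) (Fin 2) ℤ) 0 0 * (h : Matrix (Fin 2) (Fin 2) ℤ) 0 0 +
          (g : Matrix (Fin 2) (Fin 2) ℤ) 0 1 * (h : Matrix (Fin 2) (Fin 2) ℤ) 1 0 : ℤ)) : K) - 1)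
          = ((((g : Matrix (Fin 2) (Fin 2) ℤ) 0 0 : ℤ) : K) - 1) *
              ((((h : Matrix (Fin 2) (Fin 2) ℤ) 0 0 : ℤ) : K) - 1)
            + (((((g : Matrix (Fin 2) (Fin 2) ℤ) 0 0 : ℤ) : K) - 1)
            + (((((h : Matrix (Fin 2) (Fin 2) ℤ) 0 0 : ℤ) : K) - 1)
            + (((g : Matrix (Fin 2) (Fin 2) ℤ) 0 1 : ℤ) : K) *
              (((h : Matrix (Fin 2) (Fin 2) ℤ) 1 0 : ℤ) : K))) := by
        push_cast; ring
      rw [e]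
      exact vadd_lt hv
        (vmul_lt hv (hg1 0) (le_of_lt (lt_of_lt_of_le (hh1 0) hε1)))
        (vadd_lt hv (hg1 0)
          (vadd_lt hv (hh1 0) (vmul_lt hv (hg2 0 1 (by decide)) (hho 1 0 (by decide)))))
    · show v (((((g : Matrix (Fin 2) (Fin 2) ℤ) 1 0 * (h : Matrix (Fin 2) (Fin 2) ℤ) 0 1 +
        (g : Matrix (Fin 2) (Fin 2) ℤ) 1 1 * (h : Matrix (Fin 2) (Fin 2) ℤ) 1 1 : ℤ)) : K) - 1) < ε
      have e : (((((g : Matrix (Fin 2) (Fin 2) ℤ) 1 0 * (h : Matrix (Fin 2) (Fin 2) ℤ) 0 1 +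
          (g : Matrix (Fin 2) (Fin 2) ℤ) 1 1 * (h : Matrix (Fin 2) (Fin 2) ℤ) 1 1 : ℤ)) : K) - 1)
          = ((((g : Matrix (Fin 2) (Fin 2) ℤ) 1 1 : ℤ) : K) - 1) *
              ((((h : Matrix (Fin 2) (Fin 2) ℤ) 1 1 : ℤ) : K) - 1)
            + (((((g : Matrix (Fin 2) (Fin 2) ℤ) 1 1 : ℤ) : K) - 1)
            + (((((h : Matrix (Fin 2) (Fin 2) ℤ) 1 1 : ℤ) : K) - 1)
            + (((g : Matrix (Fin 2) (Fin 2) ℤ) 1 0 : ℤ) : K) *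
              (((h : Matrix (Fin 2) (Fin 2) ℤ) 0 1 : ℤ) : K))) := by
        push_cast; ring
      rw [e]
      exact vadd_lt hv
        (vmul_lt hv (hg1 1) (le_of_lt (lt_of_lt_of_le (hh1 1) hε1)))
        (vadd_lt hv (hg1 1)
          (vadd_lt hv (hh1 1) (vmul_lt hv (hg2 1 0 (by decide)) (hho 0 1 (by decide)))))
  · intro k l hkl
    rw [Matrix.SpecialLinearGroup.coe_mul, Matrix.mul_apply, Fin.sum_univ_two]
    fin_cases k <;> fin_cases l
    · exact absurd rfl hkl
    · show v (((((g : Matrix (Fin 2) (Fin 2) ℤ) 0 0 * (h : Matrix (Fin 2) (Fin 2) ℤ) 0 1 +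
        (g : Matrix (Fin 2) (Fin 2) ℤ) 0 1 * (h : Matrix (Fin 2) (Fin 2) ℤ) 1 1 : ℤ)) : K)) < ε
      push_cast
      exact vadd_lt hv
        (by rw [mul_comm]; exact vmul_lt hv (hh2 0 1 (by decide)) (hgd 0))
        (vmul_lt hv (hg2 0 1 (by decide)) (hhd 1))
    · show v (((((g : Matrix (Fin 2) (Fin 2) ℤ) 1 0 * (h : Matrix (Fin 2) (Fin 2) ℤ) 0 0 +
        (g : Matrix (Fin 2) (Fin 2) ℤ) 1 1 * (h : Matrix (Fin 2) (Fin 2) ℤ) 1 0 : ℤ)) : K)) < ε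
      push_cast
      exact vadd_lt hv
        (vmul_lt hv (hg2 1 0 (by decide)) (hhd 0))
        (by rw [mul_comm]; exact vmul_lt hv (hh2 1 0 (by decide)) (hgd 1))
    · exact absurd rfl hkl

lemma cond_inv (hv : IsNAV v) {g : SL2Z} (hg : Cond v ε g) : Cond v ε g⁻¹ := by
  obtain ⟨hg1, hg2⟩ := hg
  have hcoe : ((g⁻¹ : SL2Z) : Matrix (Fin 2) (Fin 2) ℤ)
      = !![(g : Matrix (Fin 2) (Fin 2) ℤ) 1 1, -(g : Matrix (Fin 2) (Fin 2) ℤ) 0 1;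
           -(g : Matrix (Fin 2) (Fin 2) ℤ) 1 0, (g : Matrix (Fin 2) (Fin 2) ℤ) 0 0] := by
    rw [Matrix.SpecialLinearGroup.coe_inv, Matrix.adjugate_fin_two]
  constructor
  · intro k
    rw [hcoe]
    fin_cases k
    · simpa using hg1 1
    · simpa using hg1 0
  · intro k l hkl
    rw [hcoe]
    fin_cases k <;> fin_cases l
    · exact absurd rfl hkl
    · simpa [v_neg hv] using hg2 0 1 (by decide)
    · simpa [v_neg hv] using hg2 1 0 (by decide)
    · exact absurd rfl hkl

end NAV

end MagnusPf

open MagnusPf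

/-- If `ch K = 0` and the residue characteristic is positive, then for
every `ε ∈ (0,1]` there is an infinite set `S(ε) ⊆ ℕ` such that the corresponding
Neumann–Magnus matrices form a basis of a free subgroup of `SL(2,ℤ,ε)`. -/
theorem magnus_free_subgroup_in_SL2eps
    {K : Type*} [Field K] (v : K → ℝ) (hv : IsNAV v)
    -- `ch K = 0`
    (hchar : ringChar K = 0)
    -- `ch k > 0`: some prime has residue zero
    (hresidue : ∃ p : ℕ, p.Prime ∧ v (p : K) < 1)
    (ε : ℝ) (hε : 0 < ε) (hε1 : ε ≤ 1) :
    ∃ S : Set ℕ, S.Infinite ∧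
      -- each `A_i`, `i ∈ S`, lies in `SL(2,ℤ,ε)`
      (∀ i ∈ S, (∀ k : Fin 2, v ((((magnusA i : Matrix.SpecialLinearGroup (Fin 2) ℤ) :
          Matrix (Fin 2) (Fin 2) ℤ) k k : ℤ) - 1 : K) < ε) ∧
        (∀ k l : Fin 2, k ≠ l → v ((((magnusA i : Matrix.SpecialLinearGroup (Fin 2) ℤ) :
          Matrix (Fin 2) (Fin 2) ℤ) k l : ℤ) : K) < ε)) ∧
      -- the subgroup generated by `{A_i}_{i ∈ S}` lies in `SL(2,ℤ,ε)` …
      (∀ w : FreeGroup S,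
        (∀ k : Fin 2, v ((((FreeGroup.lift (fun i : S => magnusA (i : ℕ)) w :
            Matrix.SpecialLinearGroup (Fin 2) ℤ) : Matrix (Fin 2) (Fin 2) ℤ) k k : ℤ) - 1 : K) < ε) ∧
        (∀ k l : Fin 2, k ≠ l → v ((((FreeGroup.lift (fun i : S => magnusA (i : ℕ)) w :
            Matrix.SpecialLinearGroup (Fin 2) ℤ) : Matrix (Fin 2) (Fin 2) ℤ) k l : ℤ) : K) < ε)) ∧
      -- … and `{A_i}_{i ∈ S}` is a basis of a free subgroup
      Function.Injective
        (FreeGroup.lift (fun i : S => magnusA (i : ℕ)) :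
          FreeGroup S →* Matrix.SpecialLinearGroup (Fin 2) ℤ) := by
  classical
  obtain ⟨p, hp, hvp⟩ := hresidue
  obtain ⟨M, hM⟩ := exists_pow_lt_of_lt_one hε hvp
  set c : ℕ := 2 * p ^ M with hc
  have hc2 : 2 ≤ c := by
    have : 1 ≤ p ^ M := Nat.one_le_pow _ _ hp.pos
    omega
  set f : ℕ → ℕ := fun t => c * (t + 1) with hf
  have hfinj : Function.Injective f := by
    intro a b hab
    simp only [hf] at hab
    have : a + 1 = b + 1 := Nat.eq_of_mul_eq_mul_left (by omega) hab
    omega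
  have hSinf : (Set.range f).Infinite := Set.infinite_range_of_injective hfinj
  have hmem2 : ∀ i ∈ Set.range f, 2 ≤ i := by
    rintro _ ⟨t, rfl⟩
    simp only [hf]
    calc 2 ≤ c := hc2
    _ = c * 1 := (mul_one c).symm
    _ ≤ c * (t + 1) := Nat.mul_le_mul_left c (by omega)
  have hbound : ∀ i ∈ Set.range f, v (((2 * (i : ℤ)) : ℤ) : K) < ε := by
    rintro _ ⟨t, rfl⟩
    have he : (((2 * ((f t : ℕ) : ℤ)) : ℤ) : K) = ((4 * (t + 1) : ℕ) : K) * ((p : K)) ^ M := by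
      simp only [hf, hc]
      push_cast
      ring
    rw [he, hv.map_mul']
    calc v ((4 * (t + 1) : ℕ) : K) * v ((p : K) ^ M)
        ≤ 1 * v ((p : K) ^ M) :=
          mul_le_mul_of_nonneg_right (v_natcast hv _) (hv.nonneg _)
      _ = v ((p : K) ^ M) := one_mul _
      _ = v (p : K) ^ M := v_pow hv _ _
      _ < ε := hM
  have hcond : ∀ i ∈ Set.range f, Cond v ε (magnusA i) := by
    intro i hi
    have h2 : 2 ≤ i := hmem2 i hi
    have hi0 : i ≠ 0 := by omega
    have hb := hbound i hi
    have h00 : (magnusA i : Matrix (Fin 2) (Fin 2) ℤ) 0 0 = 4 * (i : ℤ) ^ 2 + 1 := by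
      simp [magnusA, hi0]
    have h11 : (magnusA i : Matrix (Fin 2) (Fin 2) ℤ) 1 1 = 1 := by
      simp [magnusA, hi0]
    have h01 : (magnusA i : Matrix (Fin 2) (Fin 2) ℤ) 0 1 = 2 * (i : ℤ) := by
      simp [magnusA, hi0]
    have h10 : (magnusA i : Matrix (Fin 2) (Fin 2) ℤ) 1 0 = 2 * (i : ℤ) := by
      simp [magnusA, hi0]
    constructor
    · intro k
      fin_cases k
      · show v ((((magnusA i : Matrix (Fin 2) (Fin 2) ℤ) 0 0 : ℤ) : K) - 1) < ε
        rw [h00]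
        have e : (((4 * (i : ℤ) ^ 2 + 1 : ℤ)) : K) - 1
            = (((2 * (i : ℤ) : ℤ)) : K) * (((2 * (i : ℤ) : ℤ)) : K) := by
          push_cast; ring
        rw [e]
        exact vmul_lt hv hb (le_trans (le_of_lt hb) hε1)
      · show v ((((magnusA i : Matrix (Fin 2) (Fin 2) ℤ) 1 1 : ℤ) : K) - 1) < ε
        rw [h11]
        simpa [v_zero hv] using hε
    · intro k l hkl
      fin_cases k <;> fin_cases l
      · exact absurd rfl hkl
      · show v ((((magnusA i : Matrix (Fin 2) (Fin 2) ℤ) 0 1 : ℤ)) : K) < ε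
        rw [h01]; exact hb
      · show v ((((magnusA i : Matrix (Fin 2) (Fin 2) ℤ) 1 0 : ℤ)) : K) < ε
        rw [h10]; exact hb
      · exact absurd rfl hkl
  refine ⟨Set.range f, hSinf, fun i hi => hcond i hi, ?_, ?_⟩
  · -- words lie in SL(2,ℤ,ε)
    have H : ∀ u : FreeGroup (Set.range f),
        Cond v ε (FreeGroup.lift (fun i : (Set.range f) => magnusA (i : ℕ)) u) := by
      intro u
      induction u using FreeGroup.induction_on with
      | C1 => rw [map_one]; exact cond_one hv hε
      | of x =>
        show Cond v ε (FreeGroup.lift (fun i : (Set.range f) => magnusA (i : ℕ))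
          (FreeGroup.of x))
        rw [FreeGroup.lift_apply_of]
        exact hcond x.1 x.2
      | inv_of x ih => rw [map_inv]; exact cond_inv hv ih
      | mul x y ihx ihy => rw [map_mul]; exact cond_mul hv hε1 ihx ihy
    exact fun w => ⟨(H w).1, (H w).2⟩
  · -- injectivity via ping-pong
    haveI := hSinf.to_subtype
    haveI : Nontrivial (Set.range f) := inferInstance
    have hS2 : ∀ i : (Set.range f), 2 ≤ (i : ℕ) := fun i => hmem2 i i.2
    have hS0 : ∀ i : (Set.range f), (i : ℕ) ≠ 0 := fun i => by have := hS2 i; omega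
    have hgap : ∀ i j : (Set.range f), i ≠ j → (i : ℕ) + 2 ≤ (j : ℕ) ∨ (j : ℕ) + 2 ≤ (i : ℕ) := by
      rintro ⟨_, a, rfl⟩ ⟨_, b, rfl⟩ hij
      have hab : a ≠ b := by rintro rfl; exact hij rfl
      simp only [hf]
      rcases Nat.lt_or_ge a b with h | h
      · left
        have h1 : a + 1 ≤ b := h
        calc c * (a + 1) + 2 ≤ c * (a + 1) + c := by omega
          _ = c * (a + 2) := by ring
          _ ≤ c * (b + 1) := Nat.mul_le_mul_left c (by omega)
      · right
        have hba : b < a := lt_of_le_of_ne h (fun hh => hab hh.symm)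
        calc c * (b + 1) + 2 ≤ c * (b + 1) + c := by omega
          _ = c * (b + 2) := by ring
          _ ≤ c * (a + 1) := Nat.mul_le_mul_left c (by omega)
    refine FreeGroup.injective_lift_of_ping_pong
      (fun i : (Set.range f) => magnusA (i : ℕ))
      (fun i => Xset (i : ℕ)) (fun i => Yset (i : ℕ))
      (fun i => Xset_nonempty _) ?_ ?_ ?_ ?_ ?_
    · intro i j hij
      rcases hgap i j hij with h | h
      · exact Xset_disj_aux h
      · exact (Xset_disj_aux h).symm
    · intro i j hij
      rcases hgap i j hij with h | h
      · exact Yset_disj_aux h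
      · exact (Yset_disj_aux h).symm
    · intro i j
      exact XYset_disj (by have := hS2 i; omega) (by have := hS2 j; omega)
    · rintro i _ ⟨x, hx, rfl⟩
      exact magnus_maps_X (hS0 i) hx
    · rintro i _ ⟨x, hx, rfl⟩
      exact magnus_inv_maps_Y (hS0 i) hx
end

section
/- Let K be a field with ch K = p > 0 and let A, B ∈ SL(2,K) be such that the homomorphism ρ_{A,B} : F₂ → SL(2,K) is injective. Then tr(ρ_{A,B}(g)) ≠ 2 for every g ∈ F₂ with g ≠ 1. Consequently, every free subgroup of rank two of SL(2,K) acts on K² \ {0} without nontrivial fixed points. -/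
open FreeGroup List

private def RR {α : Type*} (a b : α × Bool) : Prop := ¬(a.1 = b.1 ∧ a.2 = !b.2)

private lemma reduce_eq_self_of_chain {α : Type*} [DecidableEq α] :
    ∀ {L : List (α × Bool)}, List.Chain' RR L → FreeGroup.reduce L = L
  | [], _ => rfl
  | [a], _ => rfl
  | a :: b :: L, h => by
    have h1 : RR a b := (List.isChain_cons_cons.mp h).1
    have h2 := reduce_eq_self_of_chain (List.isChain_cons_cons.mp h).2
    rw [FreeGroup.reduce.cons, h2]
    simp only [if_neg h1]

private lemma chain_of_reduce_eq_self {α : Type*} [DecidableEq α] :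
    ∀ {L : List (α × Bool)}, FreeGroup.reduce L = L → List.Chain' RR L
  | [], _ => List.isChain_nil
  | a :: L, h => by
    rw [FreeGroup.reduce.cons] at h
    rcases hM : FreeGroup.reduce L with _ | ⟨hd, tl⟩
    · rw [hM] at h
      simp only at h
      have hL : L = [] := by injection h with h1 h2; exact h2.symm
      subst hL; exact List.isChain_singleton _
    · rw [hM] at h
      simp only at h
      by_cases hc : a.1 = hd.1 ∧ a.2 = !hd.2
      · rw [if_pos hc] at h
        have hle : (FreeGroup.reduce L).length ≤ L.length := FreeGroup.reduce.red.length_le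
        rw [hM, h] at hle
        simp at hle
      · rw [if_neg hc] at h
        have h' : L = hd :: tl := by injection h with h1 h2; exact h2.symm
        subst h'
        exact List.isChain_cons_cons.mpr ⟨hc, chain_of_reduce_eq_self hM⟩

private lemma chain_flatten {α : Type*} (w : List (α × Bool)) (hw : List.Chain' RR w)
    (hcyc : ∀ x ∈ w.getLast?, ∀ y ∈ w.head?, RR x y) :
    ∀ n : ℕ, List.Chain' RR (List.flatten (List.replicate n w)) ∧
      (n ≠ 0 → (List.flatten (List.replicate n w)).head? = w.head?) := by
  intro n
  induction n with
  | zero => simp; exact List.isChain_nil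
  | succ n ih =>
    rw [List.replicate_succ, List.flatten_cons]
    constructor
    · refine hw.append ih.1 ?_
      intro x hx y hy
      rcases Nat.eq_zero_or_pos n with rfl | hn
      · simp at hy
      · rw [ih.2 hn.ne'] at hy
        exact hcyc x hx y hy
    · intro _
      rcases w with _ | ⟨a, t⟩
      · simp
      · rfl

private lemma freeGroup_torsionfree {α : Type*} [DecidableEq α] (n : ℕ) (hn : n ≠ 0) :
    ∀ g : FreeGroup α, g ^ n = 1 → g = 1 := by
  suffices H : ∀ N : ℕ, ∀ g : FreeGroup α, norm g ≤ N → g ^ n = 1 → g = 1 by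
    intro g hg; exact H (norm g) g le_rfl hg
  intro N
  induction N with
  | zero =>
    intro g hg _
    exact norm_eq_zero.mp (Nat.le_zero.mp hg)
  | succ N ih =>
    intro g hg hgn
    have cyc : ∀ w : List (α × Bool), g.toWord = w → w ≠ [] →
        (∀ a ∈ w.getLast?, ∀ b ∈ w.head?, RR a b) → False := by
      intro w hw hwne hcyc
      have hred : FreeGroup.reduce w = w := by rw [← hw]; exact reduce_toWord g
      have hchain : List.Chain' RR w := chain_of_reduce_eq_self hred
      have hflat := (chain_flatten w hchain hcyc n).1
      have hg' : g ^ n = FreeGroup.mk (List.flatten (List.replicate n w)) := by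
        conv_lhs => rw [← mk_toWord (x := g), hw]
        rw [pow_mk]
      have hword : (g ^ n).toWord = List.flatten (List.replicate n w) := by
        rw [hg', toWord_mk, reduce_eq_self_of_chain hflat]
      rw [hgn, toWord_one] at hword
      have h0 := hword.symm
      rw [List.flatten_eq_nil_iff] at h0
      exact hwne (h0 w (List.mem_replicate.mpr ⟨hn, rfl⟩))
    rcases hw : g.toWord with _ | ⟨x, rest⟩
    · exact toWord_eq_nil_iff.mp hw
    rcases List.eq_nil_or_concat rest with rfl | ⟨mid, y, rfl⟩
    · -- w = [x]
      exfalso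
      refine cyc [x] hw (by simp) ?_
      intro a ha b hb
      simp at ha hb; subst ha; subst hb
      intro ⟨_, h2⟩
      simp at h2
    · by_cases hxy : y = (x.1, !x.2)
      · -- cyclic reduction step
        have hwdecomp : g.toWord = x :: mid ++ [y] := by simpa using hw
        set c : FreeGroup α := FreeGroup.mk [x] with hc
        have hcy : c⁻¹ = FreeGroup.mk [y] := by
          rw [hc, FreeGroup.inv_mk, hxy]
          simp [FreeGroup.invRev]
        have hgdecomp : g = c * FreeGroup.mk mid * c⁻¹ := by
          rw [hcy, hc, FreeGroup.mul_mk, FreeGroup.mul_mk, ← mk_toWord (x := g), hwdecomp]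
          simp
        set h' : FreeGroup α := FreeGroup.mk mid with hh'
        have hconj : g ^ n = c * h' ^ n * c⁻¹ := by
          rw [hgdecomp, conj_pow]
        have hh'n : h' ^ n = 1 := by
          have h1 : c * h' ^ n * c⁻¹ = 1 := by rw [← hconj, hgn]
          have h2 := congrArg (fun z => c⁻¹ * z * c) h1
          simpa [mul_assoc] using h2
        have hnorm : norm h' ≤ N := by
          have h1 : norm h' ≤ mid.length := norm_mk_le
          have h2 : norm g = g.toWord.length := rfl
          have h3 : g.toWord.length = mid.length + 2 := by
            rw [hwdecomp]; simp
          omega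
        have := ih h' hnorm hh'n
        rw [hgdecomp, this, mul_one, mul_inv_cancel]
      · -- cyclically reduced
        exfalso
        have hwdecomp : g.toWord = x :: mid ++ [y] := by simpa using hw
        refine cyc (x :: mid ++ [y]) hwdecomp (by simp) ?_
        intro a ha b hb
        have hlast : (x :: mid ++ [y]).getLast? = some y := by
          rw [List.getLast?_eq_getLast (by simp)]
          simp [List.getLast_append]
        have hhead : (x :: mid ++ [y]).head? = some x := rfl
        rw [hlast] at ha; rw [hhead] at hb
        simp at ha hb; subst ha; subst hb
        intro ⟨h1, h2⟩
        exact hxy (Prod.ext h1 h2)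

private lemma matrix_pow_char_eq_one {K : Type*} [Field K] (p : ℕ) (hp : p ≠ 0) (hchar : CharP K p)
    (M : Matrix (Fin 2) (Fin 2) K) (hdet : M.det = 1) (htr : M.trace = 2) : M ^ p = 1 := by
  haveI := hchar
  set N : Matrix (Fin 2) (Fin 2) K := M - 1 with hN
  have hN2 : N * N = 0 := by
    rw [Matrix.det_fin_two] at hdet
    rw [Matrix.trace_fin_two] at htr
    ext i j
    fin_cases i <;> fin_cases j <;>
      simp [hN, Matrix.mul_apply, Fin.sum_univ_two, Matrix.sub_apply, Matrix.one_apply] <;>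
      ring_nf
    · linear_combination M 0 0 * htr - hdet
    · linear_combination M 0 1 * htr
    · linear_combination M 1 0 * htr
    · linear_combination M 1 1 * htr - hdet
  have hM : M = N + 1 := by rw [hN, sub_add_cancel]
  have hcomm : Commute N (1 : Matrix (Fin 2) (Fin 2) K) := Commute.one_right N
  rw [hM, hcomm.add_pow]
  have hterm : ∀ m ∈ Finset.range (p + 1),
      N ^ m * 1 ^ (p - m) * (p.choose m : Matrix (Fin 2) (Fin 2) K)
        = if m = 0 then 1 else 0 := by
    intro m _
    rcases m with _ | _ | k
    · simp
    · simp only [zero_add, pow_one, one_pow, mul_one, Nat.choose_one_right]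
      rw [if_neg (by omega)]
      rw [CharP.cast_eq_zero (Matrix (Fin 2) (Fin 2) K) p, mul_zero]
    · rw [if_neg (by omega)]
      have : N ^ (k + 2) = 0 := by
        rw [pow_add, pow_two, hN2, mul_zero]
      rw [this, zero_mul, zero_mul]
  rw [Finset.sum_congr rfl hterm, Finset.sum_ite_eq' (Finset.range (p+1)) 0 (fun _ => (1 : Matrix (Fin 2) (Fin 2) K))]
  simp [Nat.pos_of_ne_zero hp]

/-- In positive characteristic, a faithful representation
`ρ_{A,B} : F₂ → SL(2,K)` has no nonidentity element of trace `2`; consequently every free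
subgroup of rank two of `SL(2,K)` acts on `K² \ {0}` without nontrivial fixed points. -/
theorem faithful_rep_trace_ne_two_pos_char
    {K : Type*} [Field K] (p : ℕ) (hp : p ≠ 0) (hchar : CharP K p)
    (A B : Matrix.SpecialLinearGroup (Fin 2) K)
    -- `ρ_{A,B}` is injective (faithful)
    (hinj : Function.Injective
      (FreeGroup.lift (fun b : Bool => if b then A else B) :
        FreeGroup Bool →* Matrix.SpecialLinearGroup (Fin 2) K)) :
    -- `tr (ρ_{A,B} g) ≠ 2` for `g ≠ 1`
    (∀ g : FreeGroup Bool, g ≠ 1 →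
      Matrix.trace ((FreeGroup.lift (fun b : Bool => if b then A else B) g :
        Matrix.SpecialLinearGroup (Fin 2) K) : Matrix (Fin 2) (Fin 2) K) ≠ 2) ∧
    -- the free subgroup `⟨A,B⟩` acts on `K² \ {0}` without nontrivial fixed points
    (∀ g : FreeGroup Bool, g ≠ 1 → ∀ x : Fin 2 → K, x ≠ 0 →
      ((FreeGroup.lift (fun b : Bool => if b then A else B) g :
        Matrix.SpecialLinearGroup (Fin 2) K) : Matrix (Fin 2) (Fin 2) K).mulVec x ≠ x) := by
  set ρ := (FreeGroup.lift (fun b : Bool => if b then A else B) :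
    FreeGroup Bool →* Matrix.SpecialLinearGroup (Fin 2) K) with hρ
  have key : ∀ g : FreeGroup Bool, g ≠ 1 →
      Matrix.trace ((ρ g : Matrix.SpecialLinearGroup (Fin 2) K) : Matrix (Fin 2) (Fin 2) K) ≠ 2 := by
    intro g hg htr
    have hdet : ((ρ g : Matrix.SpecialLinearGroup (Fin 2) K) : Matrix (Fin 2) (Fin 2) K).det = 1 :=
      (ρ g).prop
    have hpow := matrix_pow_char_eq_one p hp hchar _ hdet htr
    have hpow' : ρ (g ^ p) = 1 := by
      apply Subtype.ext
      rw [map_pow]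
      rw [Matrix.SpecialLinearGroup.coe_pow]
      exact hpow
    have : g ^ p = 1 := hinj (by rw [hpow', _root_.map_one])
    exact hg (freeGroup_torsionfree p hp g this)
  refine ⟨key, ?_⟩
  intro g hg x hx hfix
  apply key g hg
  have hzero : ((ρ g : Matrix.SpecialLinearGroup (Fin 2) K) : Matrix (Fin 2) (Fin 2) K).mulVec x
      - (1 : Matrix (Fin 2) (Fin 2) K).mulVec x = 0 := by
    rw [hfix, Matrix.one_mulVec, sub_self]
  rw [← Matrix.sub_mulVec] at hzero
  have hdet0 : (((ρ g : Matrix.SpecialLinearGroup (Fin 2) K) : Matrix (Fin 2) (Fin 2) K)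
      - 1).det = 0 :=
    (Matrix.exists_mulVec_eq_zero_iff).mp ⟨x, hx, hzero⟩
  set M := ((ρ g : Matrix.SpecialLinearGroup (Fin 2) K) : Matrix (Fin 2) (Fin 2) K) with hM
  have hdet : M.det = 1 := (ρ g).prop
  rw [Matrix.det_fin_two] at hdet
  have h2 : (M - 1).det = 0 := hdet0
  rw [Matrix.det_fin_two] at h2
  simp only [Matrix.sub_apply, Matrix.one_apply] at h2
  rw [Matrix.trace_fin_two]
  norm_num at h2
  linear_combination -h2 + hdet
end

section
/- For every element w of the free group F₂ on generators a, b there exists a polynomial P_w ∈ ℤ[X,Y,Z], depending only on the conjugacy class of w, such that for every field K and all matrices A, B ∈ SL(2,K): tr(ρ_{A,B}(w)) = P_w(tr A, tr B, tr(AB)), where the integer coefficients of P_w are interpreted in K via the canonical ring homomorphism ℤ → K. Moreover one can take P_{1} = 2, P_a = X, P_b = Y and P_{ab} = Z. -/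
open Matrix MvPolynomial

section TraceAux

/-- Cayley–Hamilton for `SL₂`: `A² = (tr A) A - 1`. -/
theorem sl2_CH' {K : Type*} [CommRing K] (A : Matrix.SpecialLinearGroup (Fin 2) K) :
    (A : Matrix (Fin 2) (Fin 2) K) * A =
      (Matrix.trace (A : Matrix (Fin 2) (Fin 2) K)) • (A : Matrix (Fin 2) (Fin 2) K) - 1 := by
  have h : Matrix.det (A : Matrix (Fin 2) (Fin 2) K) = 1 := A.2
  rw [Matrix.det_fin_two] at h
  ext i j
  fin_cases i <;> fin_cases j <;>
    simp [Matrix.mul_apply, Fin.sum_univ_two, Matrix.trace_fin_two, Matrix.one_apply] <;>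
    first
      | ring1
      | linear_combination -h

/-- Polarized Cayley–Hamilton for 2×2 matrices. -/
theorem mat_BA' {K : Type*} [CommRing K] (A B : Matrix (Fin 2) (Fin 2) K) :
    B * A = (Matrix.trace (A * B) - Matrix.trace A * Matrix.trace B) • (1 : Matrix (Fin 2) (Fin 2) K)
      + (Matrix.trace B) • A + (Matrix.trace A) • B - A * B := by
  ext i j
  fin_cases i <;> fin_cases j <;>
    simp [Matrix.mul_apply, Fin.sum_univ_two, Matrix.trace_fin_two, Matrix.one_apply] <;> ring

/-- In `SL₂`, `A⁻¹ = (tr A) - A`. -/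
theorem sl2_inv' {K : Type*} [CommRing K] (A : Matrix.SpecialLinearGroup (Fin 2) K) :
    ((A⁻¹ : Matrix.SpecialLinearGroup (Fin 2) K) : Matrix (Fin 2) (Fin 2) K)
      = (Matrix.trace (A : Matrix (Fin 2) (Fin 2) K)) • (1 : Matrix (Fin 2) (Fin 2) K) - A := by
  rw [Matrix.SpecialLinearGroup.coe_inv, Matrix.adjugate_fin_two]
  ext i j
  fin_cases i <;> fin_cases j <;>
    simp [Matrix.trace_fin_two, Matrix.one_apply]

/-- The span of `1, A, B, AB` is closed under multiplication (with the indicated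
structure constants), provided `A, B` satisfy the `SL₂` trace relations. -/
theorem key' {S M : Type*} [CommRing S] [Ring M] [Algebra S M] (x y z : S) (A B : M)
    (hA : A * A = x • A - 1) (hB : B * B = y • B - 1)
    (hBA : B * A = (z - x * y) • (1 : M) + y • A + x • B - A * B)
    (c d : Fin 4 → S) :
    (c 0 • (1:M) + c 1 • A + c 2 • B + c 3 • (A * B)) *
      (d 0 • (1:M) + d 1 • A + d 2 • B + d 3 • (A * B)) =
    (c 0 * d 0 - c 1 * d 1 + c 2 * d 1 * (z - x * y) - c 2 * d 2 - c 2 * d 3 * x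
        - c 3 * d 1 * y - c 3 * d 3) • (1:M)
    + (c 0 * d 1 + c 1 * d 0 + c 1 * d 1 * x + c 2 * d 1 * y + c 2 * d 3 + c 3 * d 1 * z
        - c 3 * d 2) • A
    + (c 0 * d 2 - c 1 * d 3 + c 2 * d 0 + c 2 * d 1 * x + c 2 * d 2 * y + c 2 * d 3 * z
        + c 3 * d 1) • B
    + (c 0 * d 3 + c 1 * d 2 + c 1 * d 3 * x - c 2 * d 1 + c 3 * d 0 + c 3 * d 2 * y
        + c 3 * d 3 * z) • (A * B) := by
  have hAAB : A * (A * B) = x • (A * B) - B := by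
    rw [← mul_assoc, hA, sub_mul, smul_mul_assoc, one_mul]
  have hABB : (A * B) * B = y • (A * B) - A := by
    rw [mul_assoc, hB, mul_sub, mul_smul_comm, mul_one]
  have hBAB : B * (A * B) = A + z • B - x • (1 : M) := by
    rw [← mul_assoc, hBA]
    simp only [sub_mul, add_mul, smul_mul_assoc, one_mul, hB, hABB]
    module
  have hABA : (A * B) * A = B + z • A - y • (1 : M) := by
    rw [mul_assoc, hBA]
    simp only [mul_sub, mul_add, mul_smul_comm, mul_one, hA, hAAB]
    module
  have hABAB : (A * B) * (A * B) = z • (A * B) - 1 := by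
    rw [mul_assoc A B (A*B), hBAB]
    simp only [mul_sub, mul_add, mul_smul_comm, mul_one, hA]
    module
  simp only [mul_add, add_mul, smul_mul_assoc, mul_smul_comm, mul_one, one_mul,
    hA, hB, hBA, hAAB, hABB, hBAB, hABA, hABAB]
  module

end TraceAux

noncomputable section TracePoly

universe v u

/-- the evaluation at the traces of `A`, `B`, `AB` -/
abbrev tev {K : Type v} [Field K] (A B : Matrix.SpecialLinearGroup (Fin 2) K) :
    MvPolynomial (Fin 3) ℤ →+* K :=
  (MvPolynomial.aeval
      ![Matrix.trace (A : Matrix (Fin 2) (Fin 2) K),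
        Matrix.trace (B : Matrix (Fin 2) (Fin 2) K),
        Matrix.trace ((A : Matrix (Fin 2) (Fin 2) K) * (B : Matrix (Fin 2) (Fin 2) K))] :
    MvPolynomial (Fin 3) ℤ →ₐ[ℤ] K).toRingHom

/-- `c` gives the coordinates of `ρ_{A,B}(w)` in the "basis" `1, A, B, AB`,
for all fields `K` in universe `v`. -/
def Good (w : FreeGroup Bool) (c : Fin 4 → MvPolynomial (Fin 3) ℤ) : Prop :=
  ∀ (K : Type v) [Field K] (A B : Matrix.SpecialLinearGroup (Fin 2) K),
    ((FreeGroup.lift (fun b : Bool => if b then A else B) w :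
        Matrix.SpecialLinearGroup (Fin 2) K) : Matrix (Fin 2) (Fin 2) K) =
      tev A B (c 0) • (1 : Matrix (Fin 2) (Fin 2) K)
      + tev A B (c 1) • (A : Matrix (Fin 2) (Fin 2) K)
      + tev A B (c 2) • (B : Matrix (Fin 2) (Fin 2) K)
      + tev A B (c 3) • ((A : Matrix (Fin 2) (Fin 2) K) * B)

theorem good_one : Good.{v} 1 ![1, 0, 0, 0] := fun K _ A B => by simp

theorem good_a : Good.{v} (FreeGroup.of true) ![0, 1, 0, 0] := fun K _ A B => by
  rw [FreeGroup.lift_apply_of]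
  simp

theorem good_b : Good.{v} (FreeGroup.of false) ![0, 0, 1, 0] := fun K _ A B => by
  rw [FreeGroup.lift_apply_of]
  simp

theorem good_ainv : Good.{v} (FreeGroup.of true)⁻¹ ![X 0, -1, 0, 0] := fun K _ A B => by
  rw [map_inv, FreeGroup.lift_apply_of, if_pos rfl, sl2_inv' A]
  simp only [Matrix.cons_val_zero, Matrix.cons_val_one, Matrix.head_cons, Matrix.cons_val_two,
    Matrix.cons_val_three, Matrix.vecHead, Matrix.vecTail, Matrix.cons_val_succ, map_neg,
    _root_.map_one, map_zero, AlgHom.toRingHom_eq_coe, RingHom.coe_coe, aeval_X, Function.comp,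
    neg_smul, one_smul, zero_smul, sub_eq_add_neg, add_zero, Fin.isValue]
  try module

theorem good_binv : Good.{v} (FreeGroup.of false)⁻¹ ![X 1, 0, -1, 0] := fun K _ A B => by
  rw [map_inv, FreeGroup.lift_apply_of, if_neg (by simp), sl2_inv' B]
  simp only [Matrix.cons_val_zero, Matrix.cons_val_one, Matrix.head_cons, Matrix.cons_val_two,
    Matrix.cons_val_three, Matrix.vecHead, Matrix.vecTail, Matrix.cons_val_succ, map_neg,
    _root_.map_one, map_zero, AlgHom.toRingHom_eq_coe, RingHom.coe_coe, aeval_X, Function.comp,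
    neg_smul, one_smul, zero_smul, sub_eq_add_neg, add_zero, Fin.isValue]
  try module

/-- the product of two coordinate vectors -/
def mulCoef (c d : Fin 4 → MvPolynomial (Fin 3) ℤ) : Fin 4 → MvPolynomial (Fin 3) ℤ :=
  ![c 0 * d 0 - c 1 * d 1 + c 2 * d 1 * (X 2 - X 0 * X 1) - c 2 * d 2 - c 2 * d 3 * X 0
      - c 3 * d 1 * X 1 - c 3 * d 3,
    c 0 * d 1 + c 1 * d 0 + c 1 * d 1 * X 0 + c 2 * d 1 * X 1 + c 2 * d 3 + c 3 * d 1 * X 2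
      - c 3 * d 2,
    c 0 * d 2 - c 1 * d 3 + c 2 * d 0 + c 2 * d 1 * X 0 + c 2 * d 2 * X 1 + c 2 * d 3 * X 2
      + c 3 * d 1,
    c 0 * d 3 + c 1 * d 2 + c 1 * d 3 * X 0 - c 2 * d 1 + c 3 * d 0 + c 3 * d 2 * X 1
      + c 3 * d 3 * X 2]

theorem good_mul {v w : FreeGroup Bool} {c d : Fin 4 → MvPolynomial (Fin 3) ℤ}
    (hc : Good.{v} v c) (hd : Good.{v} w d) : Good.{v} (v * w) (mulCoef c d) := by
  intro K _ A B
  rw [_root_.map_mul, Matrix.SpecialLinearGroup.coe_mul, hc K A B, hd K A B,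
    key' (Matrix.trace (A : Matrix (Fin 2) (Fin 2) K))
      (Matrix.trace (B : Matrix (Fin 2) (Fin 2) K))
      (Matrix.trace ((A : Matrix (Fin 2) (Fin 2) K) * (B : Matrix (Fin 2) (Fin 2) K))) _ _
      (sl2_CH' A) (sl2_CH' B) (mat_BA' _ _)
      (fun i => tev A B (c i)) (fun i => tev A B (d i))]
  simp only [mulCoef, Matrix.cons_val_zero, Matrix.cons_val_one, Matrix.head_cons,
    Matrix.cons_val_two, Matrix.cons_val_three, Matrix.cons_val_succ, Matrix.vecTail,
    Matrix.vecHead, map_add, map_sub, _root_.map_mul, AlgHom.toRingHom_eq_coe, RingHom.coe_coe,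
    aeval_X, Function.comp, Fin.isValue]
  try module

/-- For every word `w`, there are polynomial coordinates of `ρ_{A,B}(w)` in the basis
`1, A, B, AB`, valid simultaneously in universe `u` and in universe `0`. -/
theorem main (w : FreeGroup Bool) :
    ∃ c : Fin 4 → MvPolynomial (Fin 3) ℤ, Good.{u} w c ∧ Good.{0} w c := by
  induction w using FreeGroup.induction_on with
  | C1 => exact ⟨_, good_one, good_one⟩
  | of b =>
    cases b
    · exact ⟨_, good_b, good_b⟩
    · exact ⟨_, good_a, good_a⟩
  | inv_of b _ =>
    cases b
    · exact ⟨_, good_binv, good_binv⟩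
    · exact ⟨_, good_ainv, good_ainv⟩
  | mul v w hv hw =>
    obtain ⟨c, hcu, hc0⟩ := hv
    obtain ⟨d, hdu, hd0⟩ := hw
    exact ⟨_, good_mul hcu hdu, good_mul hc0 hd0⟩

/-- the trace polynomial associated to a coordinate vector -/
def trPoly (c : Fin 4 → MvPolynomial (Fin 3) ℤ) : MvPolynomial (Fin 3) ℤ :=
  2 * c 0 + X 0 * c 1 + X 1 * c 2 + X 2 * c 3

theorem trace_eq_of_good {w : FreeGroup Bool} {c : Fin 4 → MvPolynomial (Fin 3) ℤ}
    (h : Good.{v} w c) (K : Type v) [Field K] (A B : Matrix.SpecialLinearGroup (Fin 2) K) :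
    Matrix.trace ((FreeGroup.lift (fun b : Bool => if b then A else B) w :
        Matrix.SpecialLinearGroup (Fin 2) K) : Matrix (Fin 2) (Fin 2) K)
      = tev A B (trPoly c) := by
  rw [h K A B]
  simp only [trPoly, Matrix.trace_add, Matrix.trace_smul, Matrix.trace_one, map_add,
    _root_.map_mul, map_ofNat, AlgHom.toRingHom_eq_coe, RingHom.coe_coe, aeval_X,
    Matrix.cons_val_zero, Matrix.cons_val_one, Matrix.head_cons, Matrix.cons_val_two,
    Matrix.cons_val_succ, Matrix.vecTail, Matrix.vecHead, Function.comp, smul_eq_mul,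
    Fin.isValue, Fintype.card_fin, Nat.cast_ofNat]
  ring

/-! ### The generic point -/

abbrev Fgen : Type := AlgebraicClosure (FractionRing (MvPolynomial (Fin 3) ℤ))

def fhom : MvPolynomial (Fin 3) ℤ →+* Fgen :=
  (algebraMap (FractionRing (MvPolynomial (Fin 3) ℤ)) Fgen).comp
    (algebraMap (MvPolynomial (Fin 3) ℤ) (FractionRing (MvPolynomial (Fin 3) ℤ)))

theorem fhom_inj : Function.Injective fhom :=
  (algebraMap (FractionRing (MvPolynomial (Fin 3) ℤ)) Fgen).injective.comp
    (IsFractionRing.injective (MvPolynomial (Fin 3) ℤ) (FractionRing (MvPolynomial (Fin 3) ℤ)))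

theorem exists_t : ∃ t : Fgen, t * t - fhom (X 2) * t + 1 = 0 := by
  obtain ⟨t, ht⟩ := IsAlgClosed.exists_root
    (Polynomial.C 1 * Polynomial.X ^ 2 + Polynomial.C (-(fhom (X 2))) * Polynomial.X
      + Polynomial.C 1)
    (by rw [Polynomial.degree_quadratic one_ne_zero]; exact two_ne_zero)
  refine ⟨t, ?_⟩
  have := ht
  simp only [Polynomial.IsRoot, Polynomial.eval_add, Polynomial.eval_mul, Polynomial.eval_pow,
    Polynomial.eval_C, Polynomial.eval_X, one_mul] at this
  linear_combination this

def tgen : Fgen := (exists_t).choose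

theorem tgen_eq : tgen * tgen - fhom (X 2) * tgen + 1 = 0 := (exists_t).choose_spec

def Agen : Matrix.SpecialLinearGroup (Fin 2) Fgen :=
  ⟨!![fhom (X 0), -1; 1, 0], by simp [Matrix.det_fin_two]⟩

def Bgen : Matrix.SpecialLinearGroup (Fin 2) Fgen :=
  ⟨!![0, tgen; tgen - fhom (X 2), fhom (X 1)], by
    rw [Matrix.det_fin_two]
    simp only [Matrix.cons_val', Matrix.cons_val_zero, Matrix.cons_val_one, Matrix.head_cons,
      Matrix.empty_val', Matrix.cons_val_fin_one, Matrix.head_fin_const, Matrix.of_apply]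
    linear_combination -tgen_eq⟩

theorem trace_Agen : Matrix.trace (Agen : Matrix (Fin 2) (Fin 2) Fgen) = fhom (X 0) := by
  simp [Agen, Matrix.trace_fin_two]

theorem trace_Bgen : Matrix.trace (Bgen : Matrix (Fin 2) (Fin 2) Fgen) = fhom (X 1) := by
  simp [Bgen, Matrix.trace_fin_two]

theorem trace_ABgen :
    Matrix.trace ((Agen : Matrix (Fin 2) (Fin 2) Fgen) * (Bgen : Matrix (Fin 2) (Fin 2) Fgen))
      = fhom (X 2) := by
  simp [Agen, Bgen, Matrix.trace_fin_two, Matrix.mul_apply, Fin.sum_univ_two]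
  try ring

theorem tev_gen (p : MvPolynomial (Fin 3) ℤ) : tev Agen Bgen p = fhom p := by
  simp only [tev, AlgHom.toRingHom_eq_coe, RingHom.coe_coe]
  rw [trace_Agen, trace_Bgen, trace_ABgen]
  induction p using MvPolynomial.induction_on with
  | C a => simp [fhom, MvPolynomial.algebraMap_eq]
  | add p q hp hq => simp [hp, hq]
  | mul_X p i hp => fin_cases i <;> simp [hp]

theorem tev_gen_inj {p q : MvPolynomial (Fin 3) ℤ}
    (h : tev Agen Bgen p = tev Agen Bgen q) : p = q := by
  apply fhom_inj
  rw [← tev_gen, ← tev_gen]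
  exact h

end TracePoly

/-- For every `w ∈ F₂` there is a trace polynomial
`P_w ∈ ℤ[X,Y,Z]`, constant on conjugacy classes, with
`tr (ρ_{A,B} w) = P_w (tr A, tr B, tr AB)` for all fields `K` and all `A, B ∈ SL(2,K)`;
moreover `P_1 = 2`, `P_a = X`, `P_b = Y`, `P_{ab} = Z`. -/
theorem trace_polynomials_exist :
    ∃ P : FreeGroup Bool → MvPolynomial (Fin 3) ℤ,
      -- `P_w` depends only on the conjugacy class of `w`
      (∀ w u : FreeGroup Bool, P (u * w * u⁻¹) = P w) ∧
      -- the trace identity, for every field `K` and all `A, B ∈ SL(2,K)`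
      (∀ (K : Type u) (_ : Field K) (A B : Matrix.SpecialLinearGroup (Fin 2) K)
          (w : FreeGroup Bool),
        Matrix.trace ((FreeGroup.lift (fun b : Bool => if b then A else B) w :
          Matrix.SpecialLinearGroup (Fin 2) K) : Matrix (Fin 2) (Fin 2) K) =
        MvPolynomial.aeval
          ![Matrix.trace (A : Matrix (Fin 2) (Fin 2) K),
            Matrix.trace (B : Matrix (Fin 2) (Fin 2) K),
            Matrix.trace ((A : Matrix (Fin 2) (Fin 2) K) * (B : Matrix (Fin 2) (Fin 2) K))]
          (P w)) ∧
      -- the normalizations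
      P 1 = 2 ∧
      P (FreeGroup.of true) = MvPolynomial.X 0 ∧
      P (FreeGroup.of false) = MvPolynomial.X 1 ∧
      P (FreeGroup.of true * FreeGroup.of false) = MvPolynomial.X 2 := by
  classical
  choose c hcu hc0 using main.{u}
  refine ⟨fun w => trPoly (c w), ?_, ?_, ?_, ?_, ?_, ?_⟩
  · -- conjugation invariance
    intro w u
    apply tev_gen_inj
    rw [← trace_eq_of_good (hc0 (u * w * u⁻¹)) Fgen Agen Bgen,
      ← trace_eq_of_good (hc0 w) Fgen Agen Bgen]
    rw [_root_.map_mul, _root_.map_mul, map_inv]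
    set U := (FreeGroup.lift (fun b : Bool => if b then Agen else Bgen)) u
    set W := (FreeGroup.lift (fun b : Bool => if b then Agen else Bgen)) w
    rw [Matrix.SpecialLinearGroup.coe_mul, Matrix.trace_mul_comm,
      ← Matrix.SpecialLinearGroup.coe_mul, inv_mul_cancel_left]
  · -- the trace identity
    intro K _ A B w
    exact trace_eq_of_good (hcu w) K A B
  · -- P 1 = 2
    apply tev_gen_inj
    rw [← trace_eq_of_good (hc0 1) Fgen Agen Bgen]
    simp
  · -- P a = X 0
    apply tev_gen_inj
    rw [← trace_eq_of_good (hc0 (FreeGroup.of true)) Fgen Agen Bgen, FreeGroup.lift_apply_of,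
      if_pos rfl]
    simp
  · -- P b = X 1
    apply tev_gen_inj
    rw [← trace_eq_of_good (hc0 (FreeGroup.of false)) Fgen Agen Bgen, FreeGroup.lift_apply_of,
      if_neg (by simp)]
    simp
  · -- P ab = X 2
    apply tev_gen_inj
    rw [← trace_eq_of_good (hc0 (FreeGroup.of true * FreeGroup.of false)) Fgen Agen Bgen,
      _root_.map_mul, FreeGroup.lift_apply_of, FreeGroup.lift_apply_of, if_pos rfl, if_neg (by simp),
      Matrix.SpecialLinearGroup.coe_mul]
    simp
end
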